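/- Let K = k((x)), L/K the Artin–Schreier extension given by y^p - y = x^{-m}g(x) with g a unit, gcd(m,p) = 1, and write m = pn - r with 1 < r < p. If c, d are the unique integers with 0 < c < p and c·r - d·p = 1, then u := x^{nc - d} y^c has valuation 1 in L, so the integral closure of k[[x]] in L equals k[[x]][u]. -/

import Mathlib

open PowerSeries

section wlemmas

variable {L : Type*} [Field L] (w : L → ℤ)
  (hmul : ∀ a b : L, a ≠ 0 → b ≠ 0 → w (a * b) = w a + w b)

include hmul

theorem aux_w_one : w 1 = 0 := by
  have := hmul 1 1 one_ne_zero one_ne_zero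
  simpa using this.symm

theorem aux_w_neg (a : L) (ha : a ≠ 0) : w (-a) = w a := by
  have h1 : w ((-1 : L) * (-1 : L)) = w (-1) + w (-1) := hmul _ _ (by simp) (by simp)
  simp only [neg_mul, one_mul, neg_neg] at h1
  rw [aux_w_one w hmul] at h1
  have hneg1 : w (-1 : L) = 0 := by omega
  have := hmul (-1) a (by simp) ha
  simpa [hneg1] using this

theorem aux_w_pow (a : L) (ha : a ≠ 0) (n : ℕ) : w (a ^ n) = n * w a := by
  induction n with
  | zero => simpa using aux_w_one w hmul
  | succ n ih =>
    rw [pow_succ, hmul _ _ (pow_ne_zero _ ha) ha, ih]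
    push_cast; ring

theorem aux_w_inv (a : L) (ha : a ≠ 0) : w a⁻¹ = -w a := by
  have := hmul a a⁻¹ ha (inv_ne_zero ha)
  rw [mul_inv_cancel₀ ha, aux_w_one w hmul] at this
  omega

theorem aux_w_zpow (a : L) (ha : a ≠ 0) (z : ℤ) : w (a ^ z) = z * w a := by
  cases z with
  | ofNat n => simpa using aux_w_pow w hmul a ha n
  | negSucc n =>
    rw [zpow_negSucc, aux_w_inv w hmul _ (pow_ne_zero _ ha), aux_w_pow w hmul a ha,
      Int.negSucc_eq]
    push_cast; ring

end wlemmas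

section wsums

variable {L : Type*} [Field L] (w : L → ℤ)
  (hmul : ∀ a b : L, a ≠ 0 → b ≠ 0 → w (a * b) = w a + w b)
  (hadd : ∀ a b : L, a ≠ 0 → b ≠ 0 → a + b ≠ 0 → min (w a) (w b) ≤ w (a + b))
  (hadd' : ∀ a b : L, a ≠ 0 → b ≠ 0 → a + b ≠ 0 → w a ≠ w b →
      w (a + b) = min (w a) (w b))

include hadd in
theorem aux_w_sum_ge {ι : Type*} (s : Finset ι) (f : ι → L) (B : ℤ)
    (h : ∀ i ∈ s, f i = 0 ∨ B ≤ w (f i)) (hs : s.sum f ≠ 0) : B ≤ w (s.sum f) := by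
  induction s using Finset.cons_induction with
  | empty => simp at hs
  | cons a s ha ih =>
    rw [Finset.sum_cons] at hs ⊢
    by_cases hfa : f a = 0
    · rw [hfa, zero_add] at hs ⊢
      exact ih (fun i hi => h i (Finset.mem_cons_of_mem hi)) hs
    · have hBa : B ≤ w (f a) :=
        (h a (Finset.mem_cons_self a s)).resolve_left hfa
      by_cases hrest : s.sum f = 0
      · rwa [hrest, add_zero] at hs ⊢
      · have hBrest : B ≤ w (s.sum f) := ih (fun i hi => h i (Finset.mem_cons_of_mem hi)) hrest
        exact le_trans (le_min hBa hBrest) (hadd (f a) (s.sum f) hfa hrest hs)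

include hmul hadd' in
theorem aux_w_sum_min {ι : Type*} (s : Finset ι) (f : ι → L)
    (hne : ∀ i ∈ s, f i ≠ 0)
    (hdist : ∀ i ∈ s, ∀ j ∈ s, i ≠ j → w (f i) ≠ w (f j)) (hs : s.Nonempty) :
    s.sum f ≠ 0 ∧ ∃ i ∈ s, w (s.sum f) = w (f i) ∧ ∀ j ∈ s, w (f i) ≤ w (f j) := by
  induction s using Finset.cons_induction with
  | empty => simp at hs
  | cons a s ha ih =>
    rw [Finset.sum_cons]
    by_cases hsemp : s = ∅
    · subst hsemp
      simp only [Finset.sum_empty, add_zero]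
      exact ⟨hne a (Finset.mem_cons_self a _), a, Finset.mem_cons_self a _, rfl,
        fun j hj => by
          rcases Finset.mem_cons.mp hj with rfl | hj
          · exact le_refl _
          · simp at hj⟩
    · obtain ⟨hrest, i0, hi0s, hwi0, hmin⟩ :=
        ih (fun i hi => hne i (Finset.mem_cons_of_mem hi))
          (fun i hi j hj hij => hdist i (Finset.mem_cons_of_mem hi) j
            (Finset.mem_cons_of_mem hj) hij)
          (Finset.nonempty_iff_ne_empty.mpr hsemp)
      have hfa : f a ≠ 0 := hne a (Finset.mem_cons_self a s)
      have hai0 : a ≠ i0 := fun h => ha (h ▸ hi0s)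
      have hwne : w (f a) ≠ w (s.sum f) := by
        rw [hwi0]
        exact hdist a (Finset.mem_cons_self a s) i0 (Finset.mem_cons_of_mem hi0s) hai0
      have hsum : f a + s.sum f ≠ 0 := by
        intro h0
        have h1 : s.sum f = -f a := by linear_combination h0
        rw [h1, aux_w_neg w hmul (f a) hfa] at hwne
        exact hwne rfl
      refine ⟨hsum, ?_⟩
      have hw := hadd' (f a) (s.sum f) hfa hrest hsum hwne
      by_cases hle : w (f a) ≤ w (f i0)
      · refine ⟨a, Finset.mem_cons_self a s, ?_, ?_⟩
        · rw [hw, hwi0]; omega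
        · intro j hj
          rcases Finset.mem_cons.mp hj with rfl | hj
          · exact le_refl _
          · exact le_trans hle (hmin j hj)
      · refine ⟨i0, Finset.mem_cons_of_mem hi0s, ?_, ?_⟩
        · rw [hw, hwi0]; omega
        · intro j hj
          rcases Finset.mem_cons.mp hj with rfl | hj
          · omega
          · exact hmin j hj

end wsums

open PowerSeries

theorem aux_smul_top (A : Type*) [CommRing A] (I : Ideal A) (n : ℕ) :
    (I ^ n • ⊤ : Submodule A A) = I ^ n := by
  rw [smul_eq_mul, Ideal.mul_top]

theorem aux_mem_span_X_pow {A : Type*} [CommRing A] (f : PowerSeries A) (n : ℕ) :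
    f ∈ (Ideal.span {(PowerSeries.X : PowerSeries A)}) ^ n ↔
      ∀ i < n, PowerSeries.coeff i f = 0 := by
  rw [Ideal.span_singleton_pow, Ideal.mem_span_singleton, PowerSeries.X_pow_dvd_iff]

instance aux_isAdicComplete (A : Type*) [CommRing A] :
    IsAdicComplete (Ideal.span {(PowerSeries.X : PowerSeries A)}) (PowerSeries A) where
  haus' := by
    intro f hf
    ext i
    have h := hf (i + 1)
    rw [SModEq.zero, aux_smul_top, aux_mem_span_X_pow] at h
    simpa using h i (by omega)
  prec' := by
    intro f hf
    refine ⟨PowerSeries.mk (fun n => PowerSeries.coeff n (f (n + 1))), fun n => ?_⟩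
    rw [SModEq.sub_mem, aux_smul_top, aux_mem_span_X_pow]
    intro i hi
    have h := hf (show i + 1 ≤ n by omega)
    rw [SModEq.sub_mem, aux_smul_top, aux_mem_span_X_pow] at h
    have h2 := h i (by omega)
    simp only [map_sub] at h2 ⊢
    rw [PowerSeries.coeff_mk]
    linear_combination -h2

theorem aux_qth_root {k : Type*} [Field k] (q : ℕ) (hq : q ≠ 0) (hqk : (q : k) ≠ 0)
    (h : PowerSeries k) (hh : PowerSeries.constantCoeff h = 1) :
    ∃ s : PowerSeries k, s ^ q = h := by
  have h1 : Polynomial.eval 1 (Polynomial.X ^ q - Polynomial.C h) ∈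
      Ideal.span {(PowerSeries.X : PowerSeries k)} := by
    simp only [Polynomial.eval_sub, Polynomial.eval_pow, Polynomial.eval_X,
      Polynomial.eval_C, one_pow]
    rw [Ideal.mem_span_singleton, PowerSeries.X_dvd_iff]
    simp [hh]
  have h2 : IsUnit (Ideal.Quotient.mk ((Ideal.span {(PowerSeries.X : PowerSeries k)}))
      (Polynomial.eval 1 (Polynomial.X ^ q - Polynomial.C h).derivative)) := by
    have hd : (Polynomial.X ^ q - Polynomial.C h).derivative =
        Polynomial.C (q : PowerSeries k) * Polynomial.X ^ (q - 1) := by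
      simp [Polynomial.derivative_X_pow]
    rw [hd]
    simp only [Polynomial.eval_mul, Polynomial.eval_C, Polynomial.eval_pow,
      Polynomial.eval_X, one_pow, mul_one]
    refine IsUnit.map _ ?_
    rw [PowerSeries.isUnit_iff_constantCoeff]
    simpa using IsUnit.mk0 _ hqk
  obtain ⟨a, ha, -⟩ := HenselianRing.is_henselian (R := PowerSeries k)
      (I := Ideal.span {(PowerSeries.X : PowerSeries k)})
      (Polynomial.X ^ q - Polynomial.C h)
      (Polynomial.monic_X_pow_sub_C h hq) 1 h1 h2
  refine ⟨a, ?_⟩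
  simpa only [Polynomial.IsRoot, Polynomial.eval_sub, Polynomial.eval_pow,
    Polynomial.eval_X, Polynomial.eval_C, sub_eq_zero] using ha

open PowerSeries

section valK

variable {p : ℕ} {k : Type*} [Field k] [PerfectField k] [CharP k p]
  {L : Type*} [Field L] [Algebra (LaurentSeries k) L] [Algebra (PowerSeries k) L]
  [IsScalarTower (PowerSeries k) (LaurentSeries k) L]
  (w : L → ℤ)

omit [PerfectField k] [CharP k p] in
theorem aux_inj : Function.Injective (algebraMap (PowerSeries k) L) := by
  rw [IsScalarTower.algebraMap_eq (PowerSeries k) (LaurentSeries k) L]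
  exact (algebraMap (LaurentSeries k) L).injective.comp
    (IsFractionRing.injective (PowerSeries k) (LaurentSeries k))

omit [PerfectField k] [CharP k p] in
theorem aux_ker (b : PowerSeries k) (hb : b ≠ 0) :
    algebraMap (PowerSeries k) L b ≠ 0 := fun h0 =>
  hb (aux_inj (k := k) (L := L) (h0.trans (map_zero (algebraMap (PowerSeries k) L)).symm))

variable (hp : p.Prime)
  (hmul : ∀ a b : L, a ≠ 0 → b ≠ 0 → w (a * b) = w a + w b)
  (hwx : w (algebraMap (PowerSeries k) L PowerSeries.X) = (p : ℤ))

include hp hmul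

theorem aux_w_const (a : k) (ha : a ≠ 0) :
    w (algebraMap (PowerSeries k) L (PowerSeries.C a)) = 0 := by
  haveI : ExpChar k p := ExpChar.prime hp
  set t := w (algebraMap (PowerSeries k) L (PowerSeries.C a)) with ht
  have hroot : ∀ N : ℕ, ∃ b : k, b ^ p ^ N = a := by
    intro N
    induction N with
    | zero => exact ⟨a, by simp⟩
    | succ N ih =>
      obtain ⟨b, hb⟩ := ih
      obtain ⟨e, he⟩ := surjective_frobenius k p b
      have he' : e ^ p = b := by rw [← frobenius_def]; exact he
      refine ⟨e, ?_⟩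
      rw [← hb, ← he', ← pow_mul, ← pow_succ']
  have hdvd : ∀ N : ℕ, ((p : ℤ) ^ N) ∣ t := by
    intro N
    obtain ⟨b, hb⟩ := hroot N
    have hbne : b ≠ 0 := by
      intro h0
      rw [h0, zero_pow (pow_ne_zero _ hp.ne_zero)] at hb
      exact ha hb.symm
    have hC : (PowerSeries.C a) = (PowerSeries.C b) ^ p ^ N := by
      rw [← map_pow, hb]
    have hne : algebraMap (PowerSeries k) L (PowerSeries.C b) ≠ 0 :=
      aux_ker _ (by simpa using hbne)
    have hcalc : t = ((p : ℤ) ^ N) * w (algebraMap (PowerSeries k) L (PowerSeries.C b)) := by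
      rw [ht, hC, map_pow, aux_w_pow w hmul _ hne]
      push_cast; ring
    exact ⟨_, hcalc⟩
  have hlt : |t| < (p : ℤ) ^ (t.natAbs + 1) := by
    have h1 : t.natAbs < 2 ^ (t.natAbs + 1) := (Nat.lt_two_pow_self).trans
      (Nat.pow_lt_pow_right one_lt_two (by omega))
    have h2 : (2 : ℕ) ^ (t.natAbs + 1) ≤ p ^ (t.natAbs + 1) :=
      Nat.pow_le_pow_left hp.two_le _
    rw [Int.abs_eq_natAbs]
    exact_mod_cast lt_of_lt_of_le h1 h2
  exact Int.eq_zero_of_abs_lt_dvd (hdvd (t.natAbs + 1)) hlt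

theorem aux_w_unit (v : PowerSeries k) (hv : IsUnit v) :
    w (algebraMap (PowerSeries k) L v) = 0 := by
  set a := PowerSeries.constantCoeff v with ha'
  have ha : a ≠ 0 := (PowerSeries.isUnit_constantCoeff v hv).ne_zero
  set h := PowerSeries.C a⁻¹ * v with hhdef
  have hcc : PowerSeries.constantCoeff h = 1 := by
    rw [hhdef, map_mul, PowerSeries.constantCoeff_C, ← ha', inv_mul_cancel₀ ha]
  have hvCh : v = PowerSeries.C a * h := by
    rw [hhdef, ← mul_assoc, ← map_mul, mul_inv_cancel₀ ha, map_one, one_mul]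
  have hhne : h ≠ 0 := fun h0 => by simp [h0] at hcc
  have hφh : algebraMap (PowerSeries k) L h ≠ 0 := aux_ker _ hhne
  have hCane : algebraMap (PowerSeries k) L (PowerSeries.C a) ≠ 0 :=
    aux_ker _ (by simpa using ha)
  have hwv : w (algebraMap (PowerSeries k) L v) = w (algebraMap (PowerSeries k) L h) := by
    rw [hvCh, map_mul, hmul _ _ hCane hφh, aux_w_const w hp hmul a ha, zero_add]
  set t := w (algebraMap (PowerSeries k) L h) with ht
  have hdvd : ∀ q : ℕ, q.Prime → q ≠ p → (q : ℤ) ∣ t := by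
    intro q hq hqp
    have hqk : (q : k) ≠ 0 := by
      rw [Ne, CharP.cast_eq_zero_iff k p q]
      intro hpq
      exact hqp ((Nat.prime_dvd_prime_iff_eq hp hq).mp hpq).symm
    obtain ⟨s, hs⟩ := aux_qth_root q hq.ne_zero hqk h hcc
    have hsne : s ≠ 0 := fun h0 => hhne (by rw [← hs, h0, zero_pow hq.ne_zero])
    have hφs : algebraMap (PowerSeries k) L s ≠ 0 := aux_ker _ hsne
    rw [ht, ← hs, map_pow, aux_w_pow w hmul _ hφs]
    exact ⟨_, rfl⟩
  obtain ⟨q, hqlt, hq⟩ := Nat.exists_infinite_primes (max (t.natAbs + 1) (p + 1))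
  have hqp : q ≠ p := by omega
  have hqdvd : (q : ℤ) ∣ t := hdvd q hq hqp
  rw [hwv]
  refine Int.eq_zero_of_abs_lt_dvd hqdvd ?_
  rw [Int.abs_eq_natAbs]
  exact_mod_cast by omega

include hwx

theorem aux_w_ps (f : PowerSeries k) (hf : f ≠ 0) :
    ∃ e : ℕ, w (algebraMap (PowerSeries k) L f) = (e : ℤ) * p := by
  obtain ⟨e, u, hfu⟩ := IsDiscreteValuationRing.eq_unit_mul_pow_irreducible hf
    PowerSeries.X_irreducible
  refine ⟨e, ?_⟩
  have hXne : algebraMap (PowerSeries k) L PowerSeries.X ≠ 0 :=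
    aux_ker _ PowerSeries.X_ne_zero
  have hune : algebraMap (PowerSeries k) L (u : PowerSeries k) ≠ 0 := aux_ker _ u.ne_zero
  rw [hfu, map_mul, map_pow, hmul _ _ hune (pow_ne_zero _ hXne),
    aux_w_unit w hp hmul u.val u.isUnit, aux_w_pow w hmul _ hXne, hwx, zero_add]

theorem aux_w_laurent (a : LaurentSeries k) (ha : a ≠ 0) :
    ∃ e : ℤ, w (algebraMap (LaurentSeries k) L a) = e * p ∧
      (0 ≤ e → ∃ b : PowerSeries k, algebraMap (PowerSeries k) (LaurentSeries k) b = a) := by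
  obtain ⟨⟨f, d⟩, hfd⟩ := IsLocalization.surj (M := nonZeroDivisors (PowerSeries k))
    (S := LaurentSeries k) a
  have hdne : (d : PowerSeries k) ≠ 0 := nonZeroDivisors.ne_zero d.2
  have hθd : algebraMap (PowerSeries k) (LaurentSeries k) (d : PowerSeries k) ≠ 0 := fun h0 =>
    hdne (IsFractionRing.injective (PowerSeries k) (LaurentSeries k)
      (h0.trans (map_zero (algebraMap (PowerSeries k) (LaurentSeries k))).symm))
  have hfne : f ≠ 0 := by
    rintro rfl
    rw [map_zero] at hfd
    exact mul_ne_zero ha hθd hfd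
  obtain ⟨ef, uf, hf⟩ := IsDiscreteValuationRing.eq_unit_mul_pow_irreducible hfne
    PowerSeries.X_irreducible
  obtain ⟨ed, ud, hd⟩ := IsDiscreteValuationRing.eq_unit_mul_pow_irreducible hdne
    PowerSeries.X_irreducible
  have hψ : ∀ b : PowerSeries k, algebraMap (LaurentSeries k) L
      (algebraMap (PowerSeries k) (LaurentSeries k) b) = algebraMap (PowerSeries k) L b :=
    fun b => (IsScalarTower.algebraMap_apply (PowerSeries k) (LaurentSeries k) L b).symm
  have hφd : algebraMap (PowerSeries k) L (d : PowerSeries k) ≠ 0 := aux_ker _ hdne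
  have hψa : algebraMap (LaurentSeries k) L a ≠ 0 := fun h0 =>
    ha ((algebraMap (LaurentSeries k) L).injective
      (h0.trans (map_zero (algebraMap (LaurentSeries k) L)).symm))
  have hL : algebraMap (LaurentSeries k) L a * algebraMap (PowerSeries k) L (d : PowerSeries k)
      = algebraMap (PowerSeries k) L f := by
    rw [← hψ, ← hψ, ← map_mul]
    exact congrArg _ hfd
  have hXne : algebraMap (PowerSeries k) L PowerSeries.X ≠ 0 :=
    aux_ker _ PowerSeries.X_ne_zero
  have hppos : (0 : ℤ) < p := by exact_mod_cast hp.pos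
  have hwf : w (algebraMap (PowerSeries k) L f) = (ef : ℤ) * p := by
    have hune : algebraMap (PowerSeries k) L (uf : PowerSeries k) ≠ 0 := aux_ker _ uf.ne_zero
    rw [hf, map_mul, map_pow, hmul _ _ hune (pow_ne_zero _ hXne),
      aux_w_unit w hp hmul uf.val uf.isUnit, aux_w_pow w hmul _ hXne, hwx, zero_add]
  have hwd : w (algebraMap (PowerSeries k) L (d : PowerSeries k)) = (ed : ℤ) * p := by
    have hune : algebraMap (PowerSeries k) L (ud : PowerSeries k) ≠ 0 := aux_ker _ ud.ne_zero
    rw [hd, map_mul, map_pow, hmul _ _ hune (pow_ne_zero _ hXne),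
      aux_w_unit w hp hmul ud.val ud.isUnit, aux_w_pow w hmul _ hXne, hwx, zero_add]
  have hwe : w (algebraMap (LaurentSeries k) L a) = ((ef : ℤ) - ed) * p := by
    have hmm := hmul _ _ hψa hφd
    rw [hL, hwf, hwd] at hmm
    linarith
  refine ⟨(ef : ℤ) - ed, hwe, fun hge => ?_⟩
  have hle : ed ≤ ef := by omega
  refine ⟨(uf : PowerSeries k) * (↑ud⁻¹ : PowerSeries k) * PowerSeries.X ^ (ef - ed), ?_⟩
  have hbd : ((uf : PowerSeries k) * (↑ud⁻¹ : PowerSeries k) * PowerSeries.X ^ (ef - ed)) *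
      (d : PowerSeries k) = f := by
    rw [hd, hf]
    have hXX : PowerSeries.X ^ (ef - ed) * PowerSeries.X ^ ed
        = (PowerSeries.X : PowerSeries k) ^ ef := by
      rw [← pow_add, Nat.sub_add_cancel hle]
    calc (uf : PowerSeries k) * (↑ud⁻¹ : PowerSeries k) * PowerSeries.X ^ (ef - ed) *
        ((ud : PowerSeries k) * PowerSeries.X ^ ed)
        = (uf : PowerSeries k) * ((↑ud⁻¹ : PowerSeries k) * (ud : PowerSeries k)) *
          (PowerSeries.X ^ (ef - ed) * PowerSeries.X ^ ed) := by ring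
      _ = (uf : PowerSeries k) * PowerSeries.X ^ ef := by
          rw [Units.inv_mul, mul_one, hXX]
  apply mul_right_cancel₀ hθd
  rw [← map_mul, hbd, hfd]

end valK
set_option maxHeartbeats 2000000 in
theorem stmt_3 {p m n r : ℕ} (c d : ℤ) (hp : p.Prime) (hm : 0 < m)
    (hcop : Nat.Coprime m p) (hr1 : 1 < r) (hrp : r < p)
    (hmnr : (m : ℤ) = p * n - r)
    (hc0 : 0 < c) (hcp : c < p) (hcd : c * r - d * p = 1)
    {k : Type*} [Field k] [PerfectField k] [CharP k p]
    {L : Type*} [Field L] [Algebra (LaurentSeries k) L]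
    [Algebra (PowerSeries k) L]
    [IsScalarTower (PowerSeries k) (LaurentSeries k) L]
    [FiniteDimensional (LaurentSeries k) L]
    (hdeg : Module.finrank (LaurentSeries k) L = p)
    (w : L → ℤ)
    (hmul : ∀ a b : L, a ≠ 0 → b ≠ 0 → w (a * b) = w a + w b)
    (hadd : ∀ a b : L, a ≠ 0 → b ≠ 0 → a + b ≠ 0 → min (w a) (w b) ≤ w (a + b))
    (hadd' : ∀ a b : L, a ≠ 0 → b ≠ 0 → a + b ≠ 0 → w a ≠ w b →
      w (a + b) = min (w a) (w b))
    (hwx : w (algebraMap (PowerSeries k) L PowerSeries.X) = (p : ℤ))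
    (g : PowerSeries k) (hg : IsUnit g)
    (y : L) (hy : y ≠ 0)
    (heq : y ^ p - y =
      algebraMap (LaurentSeries k) L
        ((algebraMap (PowerSeries k) (LaurentSeries k) PowerSeries.X) ^ (-(m : ℤ)) *
          algebraMap (PowerSeries k) (LaurentSeries k) g))
    (hgen : Algebra.adjoin (LaurentSeries k) {y} = ⊤) :
    w ((algebraMap (PowerSeries k) L PowerSeries.X) ^ ((n : ℤ) * c - d) * y ^ c) = 1 ∧
      integralClosure (PowerSeries k) L =
        Algebra.adjoin (PowerSeries k)
          {(algebraMap (PowerSeries k) L PowerSeries.X) ^ ((n : ℤ) * c - d) * y ^ c} := by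
  classical
  have hppos : (0 : ℤ) < p := by exact_mod_cast hp.pos
  have hXLne : algebraMap (PowerSeries k) L PowerSeries.X ≠ 0 :=
    aux_ker _ PowerSeries.X_ne_zero
  have hφg_ne : algebraMap (PowerSeries k) L g ≠ 0 := aux_ker _ hg.ne_zero
  have hzpow_ne : (algebraMap (PowerSeries k) L PowerSeries.X) ^ (-(m : ℤ)) ≠ 0 :=
    zpow_ne_zero _ hXLne
  have hmap : algebraMap (LaurentSeries k) L
      ((algebraMap (PowerSeries k) (LaurentSeries k) PowerSeries.X) ^ (-(m : ℤ)) *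
        algebraMap (PowerSeries k) (LaurentSeries k) g)
      = (algebraMap (PowerSeries k) L PowerSeries.X) ^ (-(m : ℤ)) *
        algebraMap (PowerSeries k) L g := by
    rw [map_mul, map_zpow₀, ← IsScalarTower.algebraMap_apply, ← IsScalarTower.algebraMap_apply]
  have hsub_ne : y ^ p - y ≠ 0 := by
    rw [heq, hmap]
    exact mul_ne_zero hzpow_ne hφg_ne
  have hwsub : w (y ^ p - y) = -(m : ℤ) * p := by
    rw [heq, hmap, hmul _ _ hzpow_ne hφg_ne, aux_w_zpow w hmul _ hXLne, hwx,
      aux_w_unit w hp hmul g hg, add_zero]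
  have hsum_ne : y ^ p + (-y) ≠ 0 := by rw [← sub_eq_add_neg]; exact hsub_ne
  have hyp_ne : y ^ p ≠ 0 := pow_ne_zero _ hy
  have hny_ne : -y ≠ 0 := neg_ne_zero.mpr hy
  have hwyp : w (y ^ p) = (p : ℤ) * w y := aux_w_pow w hmul y hy p
  have hwny : w (-y) = w y := aux_w_neg w hmul y hy
  have hmppos : (0 : ℤ) < (m : ℤ) * p := by
    have : (0 : ℤ) < m := by exact_mod_cast hm
    positivity
  have hwylt : w y < 0 := by
    by_contra hcon
    push_neg at hcon
    have h2 := hadd _ _ hyp_ne hny_ne hsum_ne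
    rw [← sub_eq_add_neg, hwsub, hwyp, hwny] at h2
    have hppwy : 0 ≤ (p : ℤ) * w y := mul_nonneg (le_of_lt hppos) hcon
    have hmm : (-(m : ℤ)) * (p : ℤ) = -((m : ℤ) * p) := by ring
    rw [hmm] at h2
    have := le_min hppwy hcon
    omega
  have hwy : w y = -(m : ℤ) := by
    have hplt : (p : ℤ) * w y < w y := by nlinarith
    have h3 := hadd' _ _ hyp_ne hny_ne hsum_ne
      (by rw [hwyp, hwny]; exact ne_of_lt hplt)
    rw [← sub_eq_add_neg, hwsub, hwyp, hwny, min_eq_left (le_of_lt hplt)] at h3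
    have h4 : (p : ℤ) * w y = (p : ℤ) * (-(m : ℤ)) := by linear_combination -h3
    exact mul_left_cancel₀ (ne_of_gt hppos) h4
  -- the uniformizer
  set u : L := (algebraMap (PowerSeries k) L PowerSeries.X) ^ ((n : ℤ) * c - d) * y ^ c
    with hu_def
  have hyc_ne : y ^ c ≠ 0 := zpow_ne_zero _ hy
  have hxpow_ne : (algebraMap (PowerSeries k) L PowerSeries.X) ^ ((n : ℤ) * c - d) ≠ 0 :=
    zpow_ne_zero _ hXLne
  have hune : u ≠ 0 := mul_ne_zero hxpow_ne hyc_ne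
  have hwu : w u = 1 := by
    rw [hu_def, hmul _ _ hxpow_ne hyc_ne, aux_w_zpow w hmul _ hXLne, hwx,
      aux_w_zpow w hmul _ hy, hwy]
    linear_combination (-c : ℤ) * hmnr + hcd
  refine ⟨hwu, ?_⟩
  -- powers of u
  have hwupow : ∀ N : ℕ, w (u ^ N) = N := by
    intro N
    rw [aux_w_pow w hmul u hune N, hwu, mul_one]
  -- w-values of Laurent coefficients
  have hψinj : Function.Injective (algebraMap (LaurentSeries k) L) :=
    (algebraMap (LaurentSeries k) L).injective
  have hψne : ∀ a : LaurentSeries k, a ≠ 0 → algebraMap (LaurentSeries k) L a ≠ 0 :=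
    fun a ha h0 => ha (hψinj (h0.trans (map_zero _).symm))
  -- distinctness of w-values of terms
  have hterm : ∀ (a : LaurentSeries k) (i : Fin p), a ≠ 0 →
      ∃ e : ℤ, w (algebraMap (LaurentSeries k) L a * u ^ (i : ℕ)) = e * p + i ∧
        (0 ≤ e → ∃ b : PowerSeries k, algebraMap (PowerSeries k) (LaurentSeries k) b = a) := by
    intro a i ha
    obtain ⟨e, hwa, hint⟩ := aux_w_laurent w hp hmul hwx a ha
    exact ⟨e, by rw [hmul _ _ (hψne a ha) (pow_ne_zero _ hune), hwa, hwupow], hint⟩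
  have hdistinct : ∀ (gg : Fin p → LaurentSeries k) (i j : Fin p), gg i ≠ 0 → gg j ≠ 0 →
      i ≠ j → w (algebraMap (LaurentSeries k) L (gg i) * u ^ (i : ℕ)) ≠
        w (algebraMap (LaurentSeries k) L (gg j) * u ^ (j : ℕ)) := by
    intro gg i j hgi hgj hij hcon
    obtain ⟨ei, hei, -⟩ := hterm (gg i) i hgi
    obtain ⟨ej, hej, -⟩ := hterm (gg j) j hgj
    rw [hei, hej] at hcon
    have hpdvd : (p : ℤ) ∣ ((i : ℕ) : ℤ) - ((j : ℕ) : ℤ) := ⟨ej - ei, by linarith⟩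
    have habs : |((i : ℕ) : ℤ) - ((j : ℕ) : ℤ)| < p := by
      have h1 : (i : ℕ) < p := i.isLt
      have h2 : (j : ℕ) < p := j.isLt
      rw [abs_sub_lt_iff]
      omega
    have := Int.eq_zero_of_abs_lt_dvd hpdvd habs
    exact hij (Fin.ext (by omega))
  -- linear independence of powers of u
  haveI : Nonempty (Fin p) := ⟨⟨0, hp.pos⟩⟩
  have hli : LinearIndependent (LaurentSeries k) (fun i : Fin p => u ^ (i : ℕ)) := by
    rw [Fintype.linearIndependent_iff]
    intro gg hgg
    by_contra hcon
    push_neg at hcon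
    obtain ⟨i0, hi0⟩ := hcon
    set s : Finset (Fin p) := Finset.univ.filter (fun i => gg i ≠ 0) with hs_def
    have hsum_eq : (∑ i ∈ s, algebraMap (LaurentSeries k) L (gg i) * u ^ (i : ℕ)) = 0 := by
      rw [← hgg]
      rw [Finset.sum_filter_of_ne]
      · exact Finset.sum_congr rfl fun i _ => (Algebra.smul_def (gg i) _).symm
      · intro i _ hne
        intro h0
        rw [h0] at hne
        simp at hne
    have hmin := aux_w_sum_min w hmul hadd' s
      (fun i => algebraMap (LaurentSeries k) L (gg i) * u ^ (i : ℕ))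
      (fun i hi => mul_ne_zero (hψne _ (Finset.mem_filter.mp hi).2) (pow_ne_zero _ hune))
      (fun i hi j hj hij => hdistinct gg i j (Finset.mem_filter.mp hi).2
        (Finset.mem_filter.mp hj).2 hij)
      ⟨i0, Finset.mem_filter.mpr ⟨Finset.mem_univ _, hi0⟩⟩
    exact hmin.1 hsum_eq
  have hcard : Fintype.card (Fin p) = Module.finrank (LaurentSeries k) L := by
    rw [Fintype.card_fin, hdeg]
  let B : Module.Basis (Fin p) (LaurentSeries k) L := basisOfLinearIndependentOfCardEqFinrank hli hcard
  have hB : ∀ i : Fin p, B i = u ^ (i : ℕ) := fun i => by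
    rw [show B = basisOfLinearIndependentOfCardEqFinrank hli hcard from rfl,
      coe_basisOfLinearIndependentOfCardEqFinrank]
  -- the module spanned by low powers of u
  set M : Submodule (PowerSeries k) L :=
    Submodule.span (PowerSeries k) (Set.range fun i : Fin p => u ^ (i : ℕ)) with hM_def
  -- key: nonnegative valuation implies membership in M
  have hkey : ∀ z : L, z ≠ 0 → 0 ≤ w z → z ∈ M := by
    intro z hz hwz
    have hrepr : (∑ i : Fin p, B.repr z i • B i) = z := B.sum_repr z
    set gg : Fin p → LaurentSeries k := fun i => B.repr z i with hgg_def
    set s : Finset (Fin p) := Finset.univ.filter (fun i => gg i ≠ 0) with hs_def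
    have hsum_eq : (∑ i ∈ s, algebraMap (LaurentSeries k) L (gg i) * u ^ (i : ℕ)) = z := by
      rw [← hrepr]
      rw [Finset.sum_filter_of_ne]
      · exact Finset.sum_congr rfl fun i _ => by
          rw [Algebra.smul_def, hB]
      · intro i _ hne h0
        rw [h0] at hne
        simp at hne
    have hsne : s.Nonempty := by
      rcases Finset.eq_empty_or_nonempty s with hemp | hne
      · exfalso
        apply hz
        rw [← hsum_eq, hemp, Finset.sum_empty]
      · exact hne
    obtain ⟨hne0, i0, hi0s, hwi0, hminall⟩ := aux_w_sum_min w hmul hadd' s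
      (fun i => algebraMap (LaurentSeries k) L (gg i) * u ^ (i : ℕ))
      (fun i hi => mul_ne_zero (hψne _ (Finset.mem_filter.mp hi).2) (pow_ne_zero _ hune))
      (fun i hi j hj hij => hdistinct gg i j (Finset.mem_filter.mp hi).2
        (Finset.mem_filter.mp hj).2 hij) hsne
    rw [hsum_eq] at hwi0
    -- each coefficient is a power series
    have hcoeff : ∀ j ∈ s, ∃ b : PowerSeries k,
        algebraMap (PowerSeries k) (LaurentSeries k) b = gg j := by
      intro j hj
      have hgj : gg j ≠ 0 := (Finset.mem_filter.mp hj).2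
      obtain ⟨e, hwe, hint⟩ := hterm (gg j) j hgj
      have hge : 0 ≤ w (algebraMap (LaurentSeries k) L (gg j) * u ^ (j : ℕ)) := by
        have h1 := hminall j hj
        rw [← hwi0] at h1
        omega
      rw [hwe] at hge
      apply hint
      by_contra hcon
      push_neg at hcon
      have he1 : e ≤ -1 := by omega
      have : e * p ≤ -1 * p := mul_le_mul_of_nonneg_right he1 (le_of_lt hppos)
      have hjlt : ((j : ℕ) : ℤ) < p := by exact_mod_cast j.isLt
      omega
    choose b hb using hcoeff
    rw [← hsum_eq]
    apply Submodule.sum_mem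
    intro j hj
    have : algebraMap (LaurentSeries k) L (gg j) * u ^ (j : ℕ) = b j hj • u ^ (j : ℕ) := by
      rw [Algebra.smul_def, IsScalarTower.algebraMap_apply (PowerSeries k) (LaurentSeries k) L,
        hb j hj]
    rw [this]
    exact Submodule.smul_mem M _ (Submodule.subset_span ⟨j, rfl⟩)
  have hpow_mem : ∀ N : ℕ, u ^ N ∈ M := fun N =>
    hkey _ (pow_ne_zero _ hune) (by rw [hwupow]; positivity)
  -- M is a subalgebra
  have hMM : ∀ a ∈ M, ∀ b ∈ M, a * b ∈ M := by
    have h1 : M * M ≤ M := by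
      rw [hM_def, Submodule.span_mul_span]
      refine Submodule.span_le.mpr ?_
      rintro z hz
      rw [Set.mem_mul] at hz
      obtain ⟨z1, ⟨i, rfl⟩, z2, ⟨j, rfl⟩, rfl⟩ := hz
      rw [← pow_add]
      exact hpow_mem _
    intro a ha b hb
    exact h1 (Submodule.mul_mem_mul ha hb)
  have hone_mem : (1 : L) ∈ M := by
    have := hpow_mem 0
    rwa [pow_zero] at this
  let S : Subalgebra (PowerSeries k) L :=
    { carrier := (M : Set L)
      mul_mem' := fun {a b} ha hb => hMM a ha b hb
      one_mem' := hone_mem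
      add_mem' := fun {a b} ha hb => M.add_mem ha hb
      zero_mem' := M.zero_mem
      algebraMap_mem' := fun r => by
        have : algebraMap (PowerSeries k) L r = r • (1 : L) := by
          rw [Algebra.algebraMap_eq_smul_one]
        rw [this]
        exact M.smul_mem r hone_mem }
  have hS_submodule : Subalgebra.toSubmodule S = M := by
    ext z
    rfl
  have hSfg : (Subalgebra.toSubmodule S).FG := by
    rw [hS_submodule, hM_def]
    exact Submodule.fg_span (Set.finite_range _)
  have hu_mem_S : u ∈ S := by
    have := hpow_mem 1
    rw [pow_one] at this
    exact this
  have hu_int : IsIntegral (PowerSeries k) u := IsIntegral.of_mem_of_fg S hSfg u hu_mem_S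
  -- conclude
  apply le_antisymm
  · -- integral closure ⊆ adjoin
    intro z hz
    have hM_le : M ≤ Subalgebra.toSubmodule (Algebra.adjoin (PowerSeries k) ({u} : Set L)) := by
      rw [hM_def]
      refine Submodule.span_le.mpr ?_
      rintro z' ⟨i, rfl⟩
      simp only [SetLike.mem_coe, Subalgebra.mem_toSubmodule]
      exact pow_mem (Algebra.subset_adjoin (Set.mem_singleton u)) _
    rcases eq_or_ne z 0 with rfl | hzne
    · exact Subalgebra.zero_mem _
    have hzint : IsIntegral (PowerSeries k) z := hz
    obtain ⟨P, hPmonic, hPeval0⟩ := hzint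
    have hPeval : Polynomial.aeval z P = 0 := by rwa [Polynomial.aeval_def]
    have hN1 : 1 ≤ P.natDegree := by
      by_contra hcon
      push_neg at hcon
      have h0 : P.natDegree = 0 := by omega
      have : P = 1 := hPmonic.natDegree_eq_zero.mp h0
      rw [this] at hPeval
      simp at hPeval
    set N := P.natDegree with hN_def
    have hsum := Polynomial.aeval_eq_sum_range (R := PowerSeries k) (p := P) z
    rw [hPeval, Finset.sum_range_succ, ← hN_def, hPmonic.coeff_natDegree, one_smul] at hsum
    have hzN : z ^ N = -(∑ i ∈ Finset.range N, P.coeff i • z ^ i) := by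
      rw [eq_neg_iff_add_eq_zero, add_comm]
      exact hsum.symm
    have hwz : 0 ≤ w z := by
      by_contra hcon
      push_neg at hcon
      have hsum_ne' : (∑ i ∈ Finset.range N, P.coeff i • z ^ i) ≠ 0 := by
        intro h0
        rw [h0, neg_zero] at hzN
        exact pow_ne_zero N hzne hzN
      have hge := aux_w_sum_ge w hadd (Finset.range N) (fun i => P.coeff i • z ^ i)
        (((N : ℤ) - 1) * w z) ?_ hsum_ne'
      · have hwzN : w (z ^ N) = (N : ℤ) * w z := aux_w_pow w hmul z hzne N
        have hwneg : w (z ^ N) = w (∑ i ∈ Finset.range N, P.coeff i • z ^ i) := by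
          rw [hzN, aux_w_neg w hmul _ hsum_ne']
        rw [← hwneg, hwzN] at hge
        nlinarith
      · intro i hi
        rcases eq_or_ne (P.coeff i) 0 with hc0 | hcne
        · left
          show P.coeff i • z ^ i = 0
          rw [hc0, zero_smul]
        · right
          show ((N : ℤ) - 1) * w z ≤ w (P.coeff i • z ^ i)
          rw [Algebra.smul_def, hmul _ _ (aux_ker _ hcne) (pow_ne_zero _ hzne),
            aux_w_pow w hmul z hzne i]
          obtain ⟨e, he⟩ := aux_w_ps w hp hmul hwx (P.coeff i) hcne
          rw [he]
          have hiN : (i : ℤ) ≤ (N : ℤ) - 1 := by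
            have := Finset.mem_range.mp hi
            omega
          have h1 : ((N : ℤ) - 1) * w z ≤ (i : ℤ) * w z :=
            mul_le_mul_of_nonpos_right hiN (le_of_lt hcon)
          have h2 : (0 : ℤ) ≤ (e : ℤ) * p := by positivity
          omega
    exact hM_le (hkey z hzne hwz)
  · -- adjoin ⊆ integral closure
    refine Algebra.adjoin_le ?_
    rw [Set.singleton_subset_iff]
    exact hu_int
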